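/- (Theorem 3: sufficiently low filter gain for an experimental constraint.) Under the setting of the invariant lemma — g C² on an open set containing the compact box I, strict univariate Lipschitz constants κ_i > 0, strict second-derivative constants M_{i₁i₂} > 0 with worst-case quadratic growth bound Q̄ and worst-case linear growth bound L̄ = Σ_i κ_i(u^U_i − u^L_i), γ ∈ [0,1) with |∂g/∂u_i| ≤ κ̃_i ≤ γκ_i on I, ε, δ > 0, iterates u_{k+1} = u_k + K_k(v_k − u_k) with u_k, v_k ∈ I, K_k ∈ [0,1], g(u_0) < 0, and for every k: g(u_k) + K_k Σ_i κ_i|v_{k,i} − u_{k,i}| ≤ 0 and (if g(u_k) ≥ −ε) ∇g(u_k)ᵀ(v_k − u_k) ≤ −δ — it follows that for every k, every K ∈ [0, min[(1 − γ)ε, 2(1 − γ)δ²/Q̄, −g(u_0)] / L̄] satisfies g(u_k) + K Σ_i κ_i|v_{k,i} − u_{k,i}| ≤ 0. -/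

import Mathlib

open Set Finset

lemma clm_eq_sum {n : ℕ} {N : Type*} [NormedAddCommGroup N] [NormedSpace ℝ N]
    (L : (Fin n → ℝ) →L[ℝ] N) (w : Fin n → ℝ) :
    L w = ∑ i, w i • L (Pi.single i 1) := by
  have hw : ∑ i, w i • (Pi.single i 1 : Fin n → ℝ) = w := by
    simp [← Pi.single_smul, Finset.univ_sum_single]
  calc L w = L (∑ i, w i • (Pi.single i 1 : Fin n → ℝ)) := by rw [hw]
    _ = ∑ i, w i • L (Pi.single i 1) := by rw [map_sum]; simp

lemma clm_abs_le {n : ℕ} (L : (Fin n → ℝ) →L[ℝ] ℝ) (w : Fin n → ℝ) {C : Fin n → ℝ}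
    (hC : ∀ i, |L (Pi.single i 1)| ≤ C i) : |L w| ≤ ∑ i, C i * |w i| := by
  rw [clm_eq_sum]
  refine (Finset.abs_sum_le_sum_abs _ _).trans (Finset.sum_le_sum fun i _ => ?_)
  rw [smul_eq_mul, abs_mul, mul_comm]
  exact mul_le_mul (hC i) le_rfl (abs_nonneg _) ((abs_nonneg _).trans (hC i))

lemma line_hasDerivAt {n : ℕ} {U : Set (Fin n → ℝ)} (hU : IsOpen U)
    {f : (Fin n → ℝ) → ℝ} (hf : DifferentiableOn ℝ f U) {x d : Fin n → ℝ} {s : ℝ}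
    (hz : x + s • d ∈ U) :
    HasDerivAt (fun s : ℝ => f (x + s • d)) (fderiv ℝ f (x + s • d) d) s := by
  have hfd : DifferentiableAt ℝ f (x + s • d) := hf.differentiableAt (hU.mem_nhds hz)
  have hline : HasDerivAt (fun s : ℝ => x + s • d) d s := by
    simpa using ((hasDerivAt_id s).smul_const d).const_add x
  exact hfd.hasFDerivAt.comp_hasDerivAt s hline

lemma key_mvt {n : ℕ} {uL uU : Fin n → ℝ} {U : Set (Fin n → ℝ)} (hU : IsOpen U)
    (hIU : Set.Icc uL uU ⊆ U) {f : (Fin n → ℝ) → ℝ} (hf : DifferentiableOn ℝ f U)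
    {C : Fin n → ℝ} (hC : ∀ z ∈ Set.Icc uL uU, ∀ i, |fderiv ℝ f z (Pi.single i 1)| ≤ C i)
    {x y : Fin n → ℝ} (hx : x ∈ Set.Icc uL uU) (hy : y ∈ Set.Icc uL uU) :
    f y - f x ≤ ∑ i, C i * |y i - x i| := by
  have hseg : ∀ s ∈ Set.Icc (0:ℝ) 1, x + s • (y - x) ∈ Set.Icc uL uU :=
    fun s hs => (convex_Icc uL uU).add_smul_sub_mem hx hy hs
  have hder : ∀ s ∈ Set.Icc (0:ℝ) 1,
      HasDerivAt (fun s => f (x + s • (y - x))) (fderiv ℝ f (x + s • (y - x)) (y - x)) s :=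
    fun s hs => line_hasDerivAt hU hf (hIU (hseg s hs))
  obtain ⟨c, hc, hslope⟩ := exists_hasDerivAt_eq_slope (fun s => f (x + s • (y - x)))
    (fun s => fderiv ℝ f (x + s • (y - x)) (y - x)) one_pos
    (fun s hs => (hder s hs).continuousAt.continuousWithinAt)
    (fun s hs => hder s (Set.Ioo_subset_Icc_self hs))
  have h1 : x + (1:ℝ) • (y - x) = y := by simp
  have h0 : x + (0:ℝ) • (y - x) = x := by simp
  rw [h1, h0, sub_zero, div_one] at hslope
  have hzI := hseg c (Set.Ioo_subset_Icc_self hc)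
  have hb := clm_abs_le (fderiv ℝ f (x + c • (y - x))) (y - x) (hC _ hzI)
  calc f y - f x = fderiv ℝ f (x + c • (y - x)) (y - x) := hslope.symm
    _ ≤ |fderiv ℝ f (x + c • (y - x)) (y - x)| := le_abs_self _
    _ ≤ ∑ i, C i * |y i - x i| := by simpa using hb

lemma second_fderiv_eval {n : ℕ} {U : Set (Fin n → ℝ)} (hU : IsOpen U)
    {g : (Fin n → ℝ) → ℝ} (hg : ContDiffOn ℝ 2 g U) {z : Fin n → ℝ} (hz : z ∈ U)
    (d w : Fin n → ℝ) :
    fderiv ℝ (fun x => fderiv ℝ g x d) z w = fderiv ℝ (fderiv ℝ g) z w d := by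
  have hF : ContDiffOn ℝ 1 (fderiv ℝ g) U := hg.fderiv_of_isOpen hU (by norm_num)
  have hFd : DifferentiableAt ℝ (fderiv ℝ g) z :=
    (hF.differentiableOn one_ne_zero).differentiableAt (hU.mem_nhds hz)
  have h : HasFDerivAt (fun x => fderiv ℝ g x d)
      ((ContinuousLinearMap.apply ℝ ℝ d).comp (fderiv ℝ (fderiv ℝ g) z)) z :=
    (ContinuousLinearMap.apply ℝ ℝ d).hasFDerivAt.comp z hFd.hasFDerivAt
  rw [h.fderiv]; rfl

lemma diff_fderiv_apply {n : ℕ} {U : Set (Fin n → ℝ)} (hU : IsOpen U)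
    {g : (Fin n → ℝ) → ℝ} (hg : ContDiffOn ℝ 2 g U) (d : Fin n → ℝ) :
    DifferentiableOn ℝ (fun x => fderiv ℝ g x d) U := by
  have hF : ContDiffOn ℝ 1 (fderiv ℝ g) U := hg.fderiv_of_isOpen hU (by norm_num)
  have hFd : DifferentiableOn ℝ (fderiv ℝ g) U := hF.differentiableOn one_ne_zero
  exact fun z hz => (((ContinuousLinearMap.apply ℝ ℝ d).hasFDerivAt.comp z
    ((hFd.differentiableAt (hU.mem_nhds hz)).hasFDerivAt)).differentiableAt).differentiableWithinAt

lemma key_taylor {n : ℕ} {uL uU : Fin n → ℝ} {U : Set (Fin n → ℝ)} (hU : IsOpen U)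
    (hIU : Set.Icc uL uU ⊆ U) {g : (Fin n → ℝ) → ℝ} (hg : ContDiffOn ℝ 2 g U)
    {M : Fin n → Fin n → ℝ}
    (hM : ∀ z ∈ Set.Icc uL uU, ∀ i₁ i₂,
      |fderiv ℝ (fun x => fderiv ℝ g x (Pi.single i₁ 1)) z (Pi.single i₂ 1)| ≤ M i₁ i₂)
    {x y : Fin n → ℝ} (hx : x ∈ Set.Icc uL uU) (hy : y ∈ Set.Icc uL uU) :
    g y ≤ g x + fderiv ℝ g x (y - x) +
      (∑ i₁, ∑ i₂, M i₁ i₂ * |y i₁ - x i₁| * |y i₂ - x i₂|) / 2 := by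
  set d : Fin n → ℝ := y - x with hd
  set Q : ℝ := ∑ i₁, ∑ i₂, M i₁ i₂ * |y i₁ - x i₁| * |y i₂ - x i₂| with hQ
  set A : ℝ := fderiv ℝ g x d with hA
  have hQ' : Q = ∑ i₁, ∑ i₂, M i₁ i₂ * |d i₁| * |d i₂| := by
    simp [hQ, hd, Pi.sub_apply]
  have hgdiff : DifferentiableOn ℝ g U := hg.differentiableOn two_ne_zero
  have hseg : ∀ s ∈ Set.Icc (0:ℝ) 1, x + s • d ∈ Set.Icc uL uU :=
    fun s hs => (convex_Icc uL uU).add_smul_sub_mem hx hy hs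
  have step1 : ∀ s ∈ Set.Icc (0:ℝ) 1, fderiv ℝ g (x + s • d) d - A ≤ s * Q := by
    intro s hs
    have hf2 : DifferentiableOn ℝ (fun z => fderiv ℝ g z d) U := diff_fderiv_apply hU hg d
    have hC2 : ∀ z ∈ Set.Icc uL uU, ∀ j,
        |fderiv ℝ (fun z => fderiv ℝ g z d) z (Pi.single j 1)| ≤ ∑ i, M i j * |d i| := by
      intro z hz j
      rw [second_fderiv_eval hU hg (hIU hz) d (Pi.single j 1)]
      refine clm_abs_le (fderiv ℝ (fderiv ℝ g) z (Pi.single j 1)) d (fun i => ?_)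
      rw [← second_fderiv_eval hU hg (hIU hz) (Pi.single i 1) (Pi.single j 1)]
      exact hM z hz i j
    have hkm := key_mvt hU hIU hf2 hC2 hx (hseg s hs)
    have he : ∀ j, (x + s • d) j - x j = s * d j := fun j => by simp
    have hrhs : ∑ j, (∑ i, M i j * |d i|) * |(x + s • d) j - x j| = s * Q := by
      have h1 : ∀ j, (∑ i, M i j * |d i|) * |(x + s • d) j - x j|
          = ∑ i, s * (M i j * |d i| * |d j|) := by
        intro j
        rw [he j, abs_mul, abs_of_nonneg hs.1, Finset.sum_mul]
        refine Finset.sum_congr rfl fun i _ => by ring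
      rw [Finset.sum_congr rfl fun j _ => h1 j, Finset.sum_comm, hQ', Finset.mul_sum]
      refine Finset.sum_congr rfl fun i _ => by rw [Finset.mul_sum]
    calc fderiv ℝ g (x + s • d) d - A
        = (fun z => fderiv ℝ g z d) (x + s • d) - (fun z => fderiv ℝ g z d) x := rfl
      _ ≤ ∑ j, (∑ i, M i j * |d i|) * |(x + s • d) j - x j| := hkm
      _ = s * Q := hrhs
  have hψder : ∀ s ∈ Set.Icc (0:ℝ) 1,
      HasDerivAt (fun s => g (x + s • d) - (g x + s * A + s ^ 2 * (Q / 2)))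
        (fderiv ℝ g (x + s • d) d - (A + s * Q)) s := by
    intro s hs
    have h1 := line_hasDerivAt hU hgdiff (hIU (hseg s hs))
    have ha : HasDerivAt (fun s : ℝ => g x + s * A) A s := by
      simpa using ((hasDerivAt_id s).mul_const A).const_add (g x)
    have hb : HasDerivAt (fun s : ℝ => s ^ 2 * (Q / 2)) (s * Q) s := by
      have hb' := (hasDerivAt_pow 2 s).mul_const (Q / 2)
      refine hb'.congr_deriv ?_
      push_cast
      ring
    exact h1.sub (ha.add hb)
  obtain ⟨c, hc, hsl⟩ := exists_hasDerivAt_eq_slope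
    (fun s => g (x + s • d) - (g x + s * A + s ^ 2 * (Q / 2)))
    (fun s => fderiv ℝ g (x + s • d) d - (A + s * Q)) one_pos
    (fun s hs => (hψder s hs).continuousAt.continuousWithinAt)
    (fun s hs => hψder s (Set.Ioo_subset_Icc_self hs))
  have h1' : x + (1:ℝ) • d = y := by rw [one_smul, hd]; abel
  have h0' : x + (0:ℝ) • d = x := by simp
  rw [h1', h0'] at hsl
  have hstep := step1 c (Set.Ioo_subset_Icc_self hc)
  have hψ1 : g y - (g x + 1 * A + 1 ^ 2 * (Q / 2)) -
      (g x - (g x + 0 * A + 0 ^ 2 * (Q / 2))) =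
      (fderiv ℝ g (x + c • d) d - (A + c * Q)) * (1 - 0) := by
    rw [hsl]; field_simp
  have : g y ≤ g x + A + Q / 2 := by nlinarith [hψ1, hstep]
  linarith [this]
set_option maxHeartbeats 2000000 in
theorem filter_gain_experimental_constraint
    {n : ℕ} (uL uU : Fin n → ℝ)
    (g : (Fin n → ℝ) → ℝ)
    (U : Set (Fin n → ℝ)) (hUopen : IsOpen U) (hIU : Set.Icc uL uU ⊆ U)
    (hg : ContDiffOn ℝ 2 g U)
    (κ : Fin n → ℝ) (hκpos : ∀ i, 0 < κ i)
    (hκ : ∀ u ∈ Set.Icc uL uU, ∀ i, |fderiv ℝ g u (Pi.single i 1)| < κ i)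
    (M : Fin n → Fin n → ℝ) (hMpos : ∀ i₁ i₂, 0 < M i₁ i₂)
    (hM : ∀ u ∈ Set.Icc uL uU, ∀ i₁ i₂,
      |fderiv ℝ (fun x => fderiv ℝ g x (Pi.single i₁ 1)) u (Pi.single i₂ 1)| < M i₁ i₂)
    (γ : ℝ) (hγ : γ ∈ Set.Ico (0 : ℝ) 1)
    (κt : Fin n → ℝ)
    (hκt : ∀ u ∈ Set.Icc uL uU, ∀ i, |fderiv ℝ g u (Pi.single i 1)| ≤ κt i)
    (hκtγ : ∀ i, κt i ≤ γ * κ i)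
    (ε δ : ℝ) (hε : 0 < ε) (hδ : 0 < δ)
    (u v : ℕ → (Fin n → ℝ)) (K : ℕ → ℝ)
    (huI : ∀ k, u k ∈ Set.Icc uL uU) (hvI : ∀ k, v k ∈ Set.Icc uL uU)
    (hKmem : ∀ k, K k ∈ Set.Icc (0 : ℝ) 1)
    (hupd : ∀ k, u (k + 1) = u k + K k • (v k - u k))
    (hfeas : ∀ k, g (u k) + K k * ∑ i, κ i * |v k i - u k i| ≤ 0)
    (hdesc : ∀ k, g (u k) ≥ -ε → fderiv ℝ g (u k) (v k - u k) ≤ -δ)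
    (h0 : g (u 0) < 0) :
    ∀ k, ∀ K' ∈ Set.Icc 0
        (min ((1 - γ) * ε)
          (min (2 * (1 - γ) * δ ^ 2 /
              ∑ i₁, ∑ i₂, M i₁ i₂ * (uU i₁ - uL i₁) * (uU i₂ - uL i₂))
            (-g (u 0))) / ∑ i, κ i * (uU i - uL i)),
      g (u k) + K' * ∑ i, κ i * |v k i - u k i| ≤ 0 := by
  have hbox : ∀ i, uL i ≤ uU i := fun i => le_trans ((huI 0).1 i) ((huI 0).2 i)
  have habs : ∀ k i, |v k i - u k i| ≤ uU i - uL i := by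
    intro k i
    rw [abs_sub_le_iff]
    constructor <;> linarith [(hvI k).1 i, (hvI k).2 i, (huI k).1 i, (huI k).2 i]
  set Lb : ℝ := ∑ i, κ i * (uU i - uL i) with hLbdef
  set Qb : ℝ := ∑ i₁, ∑ i₂, M i₁ i₂ * (uU i₁ - uL i₁) * (uU i₂ - uL i₂) with hQbdef
  have hSnonneg : ∀ k, (0:ℝ) ≤ ∑ i, κ i * |v k i - u k i| :=
    fun k => Finset.sum_nonneg fun i _ => mul_nonneg (hκpos i).le (abs_nonneg _)
  have hSle : ∀ k, (∑ i, κ i * |v k i - u k i|) ≤ Lb :=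
    fun k => Finset.sum_le_sum fun i _ =>
      mul_le_mul_of_nonneg_left (habs k i) (hκpos i).le
  by_cases hdeg : ∀ i, uU i = uL i
  · -- degenerate box : every point of the box equals uL
    have hpt : ∀ z ∈ Set.Icc uL uU, z = uL := by
      intro z hz
      funext i
      have := hz.2 i
      rw [hdeg i] at this
      exact le_antisymm this (hz.1 i)
    intro k K' hK'
    have hu : u k = u 0 := by rw [hpt (u k) (huI k), hpt (u 0) (huI 0)]
    have hv : v k = u k := by rw [hpt (v k) (hvI k), hpt (u k) (huI k)]
    have hS0 : (∑ i, κ i * |v k i - u k i|) = 0 := by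
      rw [hv]; simp
    rw [hS0, mul_zero, add_zero, hu]
    exact h0.le
  · push_neg at hdeg
    obtain ⟨i₀, hi₀⟩ := hdeg
    have hi₀' : 0 < uU i₀ - uL i₀ :=
      lt_of_le_of_ne (by linarith [hbox i₀]) (fun h => hi₀ (by linarith))
    have hLbpos : 0 < Lb := by
      refine Finset.sum_pos' (fun i _ => mul_nonneg (hκpos i).le (by linarith [hbox i]))
        ⟨i₀, Finset.mem_univ _, mul_pos (hκpos i₀) hi₀'⟩
    have hQbpos : 0 < Qb := by
      refine Finset.sum_pos' (fun i₁ _ => Finset.sum_nonneg fun i₂ _ =>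
        mul_nonneg (mul_nonneg (hMpos i₁ i₂).le (by linarith [hbox i₁])) (by linarith [hbox i₂]))
        ⟨i₀, Finset.mem_univ _, Finset.sum_pos' (fun i₂ _ =>
          mul_nonneg (mul_nonneg (hMpos i₀ i₂).le hi₀'.le) (by linarith [hbox i₂]))
          ⟨i₀, Finset.mem_univ _, mul_pos (mul_pos (hMpos i₀ i₀) hi₀') hi₀'⟩⟩
    set m : ℝ := min ((1 - γ) * ε) (min (2 * (1 - γ) * δ ^ 2 / Qb) (-g (u 0))) with hmdef
    have hγ1 : γ < 1 := hγ.2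
    have hγ0 : 0 ≤ γ := hγ.1
    have hm1 : m ≤ (1 - γ) * ε := min_le_left _ _
    have hm2 : m ≤ 2 * (1 - γ) * δ ^ 2 / Qb := le_trans (min_le_right _ _) (min_le_left _ _)
    have hm3 : m ≤ -g (u 0) := le_trans (min_le_right _ _) (min_le_right _ _)
    have hmpos : 0 < m := by
      refine lt_min (by nlinarith) (lt_min ?_ (by linarith))
      exact div_pos (by nlinarith [mul_pos (sub_pos.mpr hγ1) (pow_pos hδ 2)]) hQbpos
    have hgdiff : DifferentiableOn ℝ g U := hg.differentiableOn two_ne_zero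
    -- Lipschitz-type estimate between consecutive iterates
    have hLip : ∀ k, g (u (k + 1)) ≤ g (u k) + γ * (K k * ∑ i, κ i * |v k i - u k i|) := by
      intro k
      have hkm := key_mvt hUopen hIU hgdiff hκt (huI k) (huI (k + 1))
      have he : ∀ i, u (k + 1) i - u k i = K k * (v k i - u k i) := by
        intro i
        rw [hupd k]
        simp only [Pi.add_apply, Pi.smul_apply, Pi.sub_apply, smul_eq_mul,
          add_sub_cancel_left]
      have hb : ∑ i, κt i * |u (k + 1) i - u k i|
          ≤ γ * (K k * ∑ i, κ i * |v k i - u k i|) := by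
        have h1 : ∀ i, κt i * |u (k + 1) i - u k i|
            ≤ γ * (K k * (κ i * |v k i - u k i|)) := by
          intro i
          rw [he i, abs_mul, abs_of_nonneg (hKmem k).1]
          calc κt i * (K k * |v k i - u k i|)
              ≤ (γ * κ i) * (K k * |v k i - u k i|) :=
                mul_le_mul_of_nonneg_right (hκtγ i)
                  (mul_nonneg (hKmem k).1 (abs_nonneg _))
            _ = γ * (K k * (κ i * |v k i - u k i|)) := by ring
        calc ∑ i, κt i * |u (k + 1) i - u k i|
            ≤ ∑ i, γ * (K k * (κ i * |v k i - u k i|)) :=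
              Finset.sum_le_sum fun i _ => h1 i
          _ = γ * (K k * ∑ i, κ i * |v k i - u k i|) := by
              rw [Finset.mul_sum]
              simp only [Finset.mul_sum]
      linarith [hkm, hb]
    -- Taylor estimate between consecutive iterates
    have hTay : ∀ k, g (u (k + 1)) ≤ g (u k) +
        K k * fderiv ℝ g (u k) (v k - u k) + K k ^ 2 * Qb / 2 := by
      intro k
      have hkt := key_taylor hUopen hIU hg (fun z hz i₁ i₂ => (hM z hz i₁ i₂).le)
        (huI k) (huI (k + 1))
      have hdiffpt : u (k + 1) - u k = K k • (v k - u k) := by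
        rw [hupd k]; exact add_sub_cancel_left _ _
      have hlin : fderiv ℝ g (u k) (u (k + 1) - u k)
          = K k * fderiv ℝ g (u k) (v k - u k) := by
        rw [hdiffpt, map_smul, smul_eq_mul]
      have he : ∀ i, u (k + 1) i - u k i = K k * (v k i - u k i) := by
        intro i
        rw [hupd k]
        simp only [Pi.add_apply, Pi.smul_apply, Pi.sub_apply, smul_eq_mul,
          add_sub_cancel_left]
      have hquad : ∑ i₁, ∑ i₂, M i₁ i₂ * |u (k + 1) i₁ - u k i₁| * |u (k + 1) i₂ - u k i₂|
          ≤ K k ^ 2 * Qb := by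
        rw [hQbdef, Finset.mul_sum]
        refine Finset.sum_le_sum fun i₁ _ => ?_
        rw [Finset.mul_sum]
        refine Finset.sum_le_sum fun i₂ _ => ?_
        rw [he i₁, he i₂, abs_mul, abs_mul, abs_of_nonneg (hKmem k).1]
        have h1 := habs k i₁
        have h2 := habs k i₂
        have hab : |v k i₁ - u k i₁| * |v k i₂ - u k i₂|
            ≤ (uU i₁ - uL i₁) * (uU i₂ - uL i₂) :=
          mul_le_mul h1 h2 (abs_nonneg _) (le_trans (abs_nonneg _) h1)
        nlinarith [mul_le_mul_of_nonneg_left hab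
          (mul_nonneg (sq_nonneg (K k)) (hMpos i₁ i₂).le)]
      rw [hlin] at hkt
      linarith [hkt, hquad]
    clear_value Lb Qb m
    -- the invariant
    have hinv : ∀ k, g (u k) ≤ -m := by
      intro k
      induction k with
      | zero => linarith
      | succ k ih =>
        have ht0 : (0:ℝ) ≤ K k := (hKmem k).1
        have ht1 : K k ≤ 1 := (hKmem k).2
        have htS : K k * (∑ i, κ i * |v k i - u k i|) ≤ -g (u k) := by
          linarith [hfeas k]
        by_cases hcase : g (u k) < -ε
        · -- pure Lipschitz step
          have h1 : γ * (K k * ∑ i, κ i * |v k i - u k i|) ≤ γ * (-g (u k)) :=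
            mul_le_mul_of_nonneg_left htS hγ0
          have h2 := hLip k
          have h3 : (1 - γ) * g (u k) < (1 - γ) * (-ε) :=
            mul_lt_mul_of_pos_left hcase (by linarith)
          nlinarith [h1, h2, h3, hm1]
        · push_neg at hcase
          have hp : fderiv ℝ g (u k) (v k - u k) ≤ -δ := hdesc k (by linarith)
          obtain ⟨p, hpdef⟩ : ∃ p : ℝ, fderiv ℝ g (u k) (v k - u k) = -p :=
            ⟨-(fderiv ℝ g (u k) (v k - u k)), by ring⟩
          rw [hpdef] at hp
          have hpδ : δ ≤ p := by linarith
          have hpS : p ≤ γ * ∑ i, κ i * |v k i - u k i| := by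
            have h1 := clm_abs_le (fderiv ℝ g (u k)) (v k - u k)
              (fun i => hκt (u k) (huI k) i)
            have h2 : ∑ i, κt i * |(v k - u k) i| ≤ γ * ∑ i, κ i * |v k i - u k i| := by
              rw [Finset.mul_sum]
              refine Finset.sum_le_sum fun i _ => ?_
              have h3 := mul_le_mul_of_nonneg_right (hκtγ i) (abs_nonneg ((v k - u k) i))
              simp only [Pi.sub_apply] at h3 ⊢
              linarith [h3]
            calc p ≤ |fderiv ℝ g (u k) (v k - u k)| := by
                  rw [hpdef, abs_neg]; exact le_abs_self _
              _ ≤ ∑ i, κt i * |(v k - u k) i| := h1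
              _ ≤ γ * ∑ i, κ i * |v k i - u k i| := h2
          have hγpos : 0 < γ := by
            rcases lt_or_ge 0 γ with h | h
            · exact h
            · exfalso
              nlinarith [mul_nonneg (neg_nonneg.mpr h) (hSnonneg k), hpS, hpδ, hδ]
          by_cases hsub : K k * Qb ≤ 2 * p
          · -- Taylor step
            have h1 := hTay k
            rw [hpdef] at h1
            have h2 : K k ^ 2 * Qb / 2 ≤ K k * p := by
              nlinarith [mul_le_mul_of_nonneg_left hsub ht0]
            have h3 : g (u (k + 1)) ≤ g (u k) := by nlinarith [h1, h2]
            linarith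
          · push_neg at hsub
            have hKpos : 0 < K k := by nlinarith [hsub, hpδ, hδ, hQbpos, ht0]
            have hSpos : 0 < ∑ i, κ i * |v k i - u k i| := by
              nlinarith [hpS, hpδ, hδ, hγpos, hSnonneg k]
            have hgpos : 0 < -g (u k) := by
              nlinarith [mul_pos hKpos hSpos, htS]
            have hγa : K k * p ≤ γ * (-g (u k)) := by
              calc K k * p ≤ K k * (γ * ∑ i, κ i * |v k i - u k i|) :=
                    mul_le_mul_of_nonneg_left hpS ht0
                _ = γ * (K k * ∑ i, κ i * |v k i - u k i|) := by ring
                _ ≤ γ * (-g (u k)) := mul_le_mul_of_nonneg_left htS hγ0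
            have hKp : 2 * p ^ 2 / Qb < K k * p := by
              rw [div_lt_iff₀ hQbpos]
              nlinarith [hsub, hpδ, hδ]
            have h2δ : 2 * δ ^ 2 / Qb ≤ 2 * p ^ 2 / Qb := by
              apply (div_le_div_iff_of_pos_right hQbpos).mpr
              nlinarith [hpδ, hδ]
            have hga : 2 * δ ^ 2 / Qb < γ * (-g (u k)) := by linarith
            have hm2' : m ≤ (1 - γ) * (2 * δ ^ 2 / Qb) := by
              have : 2 * (1 - γ) * δ ^ 2 / Qb = (1 - γ) * (2 * δ ^ 2 / Qb) := by ring
              linarith [hm2, this.symm.le, this.le]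
            have hA : (1 - γ) * (2 * δ ^ 2 / Qb) < (1 - γ) * (γ * (-g (u k))) :=
              mul_lt_mul_of_pos_left hga (by linarith)
            have hfin : m < (1 - γ) * (-g (u k)) := by
              nlinarith [hA, hm2',
                mul_nonneg (mul_nonneg (by linarith : (0:ℝ) ≤ 1 - γ)
                  (by linarith : (0:ℝ) ≤ 1 - γ)) hgpos.le]
            have h4 := hLip k
            have h5 : γ * (K k * ∑ i, κ i * |v k i - u k i|) ≤ γ * (-g (u k)) :=
              mul_le_mul_of_nonneg_left htS hγ0
            nlinarith [h4, h5, hfin]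
    -- conclusion
    intro k K' hK'
    have hK'0 : 0 ≤ K' := hK'.1
    have hK'2 : K' ≤ m / Lb := hK'.2
    have h1 : K' * (∑ i, κ i * |v k i - u k i|) ≤ K' * Lb :=
      mul_le_mul_of_nonneg_left (hSle k) hK'0
    have h2 : K' * Lb ≤ m := by
      rw [le_div_iff₀ hLbpos] at hK'2
      exact hK'2
    linarith [hinv k]
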